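/- (Doctrinal Herbrand theorem.) Let P : Cᵒᵖ → BoolAlg be a Boolean doctrine over a small category C with finite products, and let (id_C, 𝔦) : P → P^∀∃ be a quantifier completion of P. For all S, Y₁, …, Y_ī, W₁, …, W_h̄, Z₁, …, Z_j̄, V₁, …, V_k̄ ∈ C, αᵢ ∈ P(S×Yᵢ), γ_h ∈ P(S×W_h), βⱼ ∈ P(S×Zⱼ), δ_k ∈ P(S×V_k), the following are equivalent: (1) in P^∀∃(S), (⋀_{i=1}^{ī} ∀_S^{Yᵢ}(𝔦_{S×Yᵢ}(αᵢ))) ∧ (⋀_{h=1}^{h̄} ∃_S^{W_h}(𝔦_{S×W_h}(γ_h))) ≤ (⋁_{j=1}^{j̄} ∀_S^{Zⱼ}(𝔦_{S×Zⱼ}(βⱼ))) ∨ (⋁_{k=1}^{k̄} ∃_S^{V_k}(𝔦_{S×V_k}(δ_k))); (2) there are n, n' ∈ ℕ, indices l₁, …, l_n ∈ {1, …, ī} and l'₁, …, l'_{n'} ∈ {1, …, k̄}, morphisms gᵢ : S × ∏_{j=1}^{j̄} Zⱼ × ∏_{h=1}^{h̄} W_h → Y_{lᵢ} and g'_k : S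 × ∏_{j=1}^{j̄} Zⱼ × ∏_{h=1}^{h̄} W_h → V_{l'_k} such that, in P(S × ∏_{j=1}^{j̄} Zⱼ × ∏_{h=1}^{h̄} W_h), ⋀_{i=1}^{n} P(⟨pr₁, gᵢ⟩)(α_{lᵢ}) ∧ ⋀_{h=1}^{h̄} P(⟨pr₁, pr_{h+j̄+1}⟩)(γ_h) ≤ ⋁_{j=1}^{j̄} P(⟨pr₁, pr_{j+1}⟩)(βⱼ) ∨ ⋁_{k=1}^{n'} P(⟨pr₁, g'_k⟩)(δ_{l'_k}). -/

import Mathlib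

open CategoryTheory CategoryTheory.Limits Opposite

universe w v u v₁ u₁ v₂ u₂ v₃ u₃

namespace BooleanDoctrine

/-- Elements of a Boolean algebra in the category `BoolAlg` can be acted on by morphisms. -/
instance (X Y : BoolAlg) : FunLike (X ⟶ Y) X Y :=
  ConcreteCategory.instFunLike

/-- A filter of a Boolean algebra: contains `⊤`, closed under binary meets, upward closed. -/
def IsBAFilter {A : Type*} [BooleanAlgebra A] (F : Set A) : Prop :=
  (⊤ : A) ∈ F ∧ (∀ a b : A, a ∈ F → b ∈ F → a ⊓ b ∈ F) ∧ ∀ a b : A, a ∈ F → a ≤ b → b ∈ F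

/-- The fiber of a Boolean doctrine at an object of the base category. -/
abbrev fiber {C : Type u₁} [Category.{v₁} C] (P : Cᵒᵖ ⥤ BoolAlg.{w}) (X : C) : Type w :=
  P.obj (op X)

/-- A universal filter for a Boolean doctrine `P : Cᵒᵖ ⥤ BoolAlg`. -/
def IsUniversalFilter {C : Type u₁} [Category.{v₁} C] [HasFiniteProducts C]
    (P : Cᵒᵖ ⥤ BoolAlg.{w}) (F : ∀ X : C, Set (P.obj (op X))) : Prop :=
  (∀ (X Y : C) (f : X ⟶ Y) (α : P.obj (op Y)), α ∈ F Y → P.map f.op α ∈ F X) ∧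
    ∀ X : C, IsBAFilter (F X)

/-- A universal ideal for a Boolean doctrine `P : Cᵒᵖ ⥤ BoolAlg`. -/
def IsUniversalIdeal {C : Type u₁} [Category.{v₁} C] [HasFiniteProducts C]
    (P : Cᵒᵖ ⥤ BoolAlg.{w}) (I : ∀ X : C, Set (P.obj (op X))) : Prop :=
  (∀ (X Y : C) (m : ℕ) (f : Fin m → (X ⟶ Y)) (α : P.obj (op Y)),
      (Finset.univ.inf fun j => P.map (f j).op α) ∈ I X → α ∈ I Y) ∧
    (∀ (X : C) (a b : P.obj (op X)), a ≤ b → b ∈ I X → a ∈ I X) ∧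
    (∀ (X₁ X₂ : C) (α₁ : P.obj (op X₁)) (α₂ : P.obj (op X₂)), α₁ ∈ I X₁ → α₂ ∈ I X₂ →
      P.map (prod.fst : X₁ ⨯ X₂ ⟶ X₁).op α₁ ⊔ P.map (prod.snd : X₁ ⨯ X₂ ⟶ X₂).op α₂ ∈
        I (X₁ ⨯ X₂)) ∧
    (⊥ : P.obj (op (⊤_ C))) ∈ I (⊤_ C)

/-- A universal ultrafilter for a Boolean doctrine `P : Cᵒᵖ ⥤ BoolAlg`. -/
def IsUniversalUltrafilter {C : Type u₁} [Category.{v₁} C] [HasFiniteProducts C]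
    (P : Cᵒᵖ ⥤ BoolAlg.{w}) (F : ∀ X : C, Set (P.obj (op X))) : Prop :=
  (∀ (X Y : C) (f : X ⟶ Y) (α : P.obj (op Y)), α ∈ F Y → P.map f.op α ∈ F X) ∧
    (∀ X : C, IsBAFilter (F X)) ∧
    (∀ (X₁ X₂ : C) (α₁ : P.obj (op X₁)) (α₂ : P.obj (op X₂)),
      P.map (prod.fst : X₁ ⨯ X₂ ⟶ X₁).op α₁ ⊔ P.map (prod.snd : X₁ ⨯ X₂ ⟶ X₂).op α₂ ∈
          F (X₁ ⨯ X₂) →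
        α₁ ∈ F X₁ ∨ α₂ ∈ F X₂) ∧
    (⊥ : P.obj (op (⊤_ C))) ∉ F (⊤_ C)

/-- Richness of a Boolean doctrine with respect to a family of subsets of the fibers. -/
def IsRich {C : Type u₁} [Category.{v₁} C] [HasFiniteProducts C]
    (P : Cᵒᵖ ⥤ BoolAlg.{w}) (F : ∀ X : C, Set (P.obj (op X))) : Prop :=
  ∀ (X : C) (α : P.obj (op X)), α ∉ F X → ∃ c : (⊤_ C) ⟶ X, P.map c.op α ∉ F (⊤_ C)

/-- The failure of the "universal closure" of `a` witnessed by a constant `c : ⊤ ⟶ X`. -/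
def IsRichAt {C : Type u₁} [Category.{v₁} C] [HasFiniteProducts C]
    (P : Cᵒᵖ ⥤ BoolAlg.{w}) (F : ∀ X : C, Set (P.obj (op X)))
    (X : C) (a : P.obj (op X)) : Prop :=
  ∃ c : (⊤_ C) ⟶ X, P.map c.op a ∉ F (⊤_ C)

/-- The universal filter generated by a family of subsets of the fibers: the intersection of
all universal filters containing the family componentwise. -/
def genUnivFilter {C : Type u₁} [Category.{v₁} C] [HasFiniteProducts C]
    (P : Cᵒᵖ ⥤ BoolAlg.{w}) (A : ∀ X : C, Set (P.obj (op X))) :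
    ∀ X : C, Set (P.obj (op X)) := fun X =>
  {φ | ∀ G : ∀ X' : C, Set (P.obj (op X')),
    IsUniversalFilter P G → (∀ X', A X' ⊆ G X') → φ ∈ G X}

/-- The universal ideal generated by a family of subsets of the fibers: the intersection of
all universal ideals containing the family componentwise. -/
def genUnivIdeal {C : Type u₁} [Category.{v₁} C] [HasFiniteProducts C]
    (P : Cᵒᵖ ⥤ BoolAlg.{w}) (A : ∀ X : C, Set (P.obj (op X))) :
    ∀ X : C, Set (P.obj (op X)) := fun X =>
  {φ | ∀ J : ∀ X' : C, Set (P.obj (op X')),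
    IsUniversalIdeal P J → (∀ X', A X' ⊆ J X') → φ ∈ J X}

/-- The family of subsets of the fibers placing the element `α i` in the component `Y i`. -/
def familyOfPoints {C : Type u₁} [Category.{v₁} C] (P : Cᵒᵖ ⥤ BoolAlg.{w}) {ι : Type u₃}
    (Y : ι → C) (α : ∀ i, P.obj (op (Y i))) : ∀ X : C, Set (P.obj (op X)) := fun X =>
  {a | ∃ (i : ι) (h : Y i = X), a = P.map (eqToHom h.symm).op (α i)}

/-- The subsets doctrine, sending a set to its powerset Boolean algebra and a function to
its preimage map. -/
def subsetsDoctrine : (Type v)ᵒᵖ ⥤ BoolAlg.{v} where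
  obj X := BoolAlg.of (Set X.unop)
  map f :=
    BoolAlg.ofHom
    { toFun := fun S => f.unop ⁻¹' S
      map_sup' := fun _ _ => rfl
      map_inf' := fun _ _ => rfl
      map_top' := rfl
      map_bot' := rfl }
  map_id _ := rfl
  map_comp _ _ := rfl

/-- A Boolean doctrine morphism: a finite-product-preserving functor together with a
natural transformation. -/
structure DoctrineHom {C : Type u₁} [Category.{v₁} C] {D : Type u₂} [Category.{v₂} D]
    (P : Cᵒᵖ ⥤ BoolAlg.{w}) (R : Dᵒᵖ ⥤ BoolAlg.{w}) where
  functor : C ⥤ D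
  preserves : PreservesFiniteProducts functor
  trans : P ⟶ functor.op ⋙ R

/-- Composition of Boolean doctrine morphisms. -/
def DoctrineHom.comp {C : Type u₁} [Category.{v₁} C] {D : Type u₂} [Category.{v₂} D]
    {E : Type u₃} [Category.{v₃} E]
    {P : Cᵒᵖ ⥤ BoolAlg.{w}} {R : Dᵒᵖ ⥤ BoolAlg.{w}} {S : Eᵒᵖ ⥤ BoolAlg.{w}}
    (Φ : DoctrineHom P R) (Ψ : DoctrineHom R S) : DoctrineHom P S where
  functor := Φ.functor ⋙ Ψ.functor
  preserves := by
    have := Φ.preserves; have := Ψ.preserves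
    infer_instance
  trans := Φ.trans ≫ Functor.whiskerLeft Φ.functor.op Ψ.trans

/-- A first-order structure on a Boolean doctrine: fiberwise right adjoints to reindexing
along first projections, satisfying the Beck–Chevalley condition. -/
structure FOStructure {C : Type u₁} [Category.{v₁} C] [HasFiniteProducts C]
    (P : Cᵒᵖ ⥤ BoolAlg.{w}) where
  fa : ∀ X Y : C, P.obj (op (X ⨯ Y)) → P.obj (op X)
  adj : ∀ (X Y : C) (α : P.obj (op X)) (β : P.obj (op (X ⨯ Y))),
      α ≤ fa X Y β ↔ P.map (prod.fst : X ⨯ Y ⟶ X).op α ≤ β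
  bc : ∀ (X X' Y : C) (f : X' ⟶ X) (β : P.obj (op (X ⨯ Y))),
      P.map f.op (fa X Y β) = fa X' Y (P.map (prod.map f (𝟙 Y)).op β)

/-- The existential quantifier `∃ = ¬∀¬` associated to a first-order structure. -/
noncomputable def FOStructure.ex {C : Type u₁} [Category.{v₁} C] [HasFiniteProducts C]
    {P : Cᵒᵖ ⥤ BoolAlg.{w}} (fo : FOStructure P) (X Y : C)
    (β : P.obj (op (X ⨯ Y))) : P.obj (op X) :=
  (fo.fa X Y βᶜ)ᶜ

/-- The canonical comparison morphism `M X ⨯ M Y ⟶ M (X ⨯ Y)` of a Boolean doctrine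
morphism, inverse to the product comparison morphism. -/
noncomputable def DoctrineHom.prodPair {C : Type u₁} [Category.{v₁} C] [HasFiniteProducts C]
    {D : Type u₂} [Category.{v₂} D] [HasFiniteProducts D]
    {P : Cᵒᵖ ⥤ BoolAlg.{w}} {R : Dᵒᵖ ⥤ BoolAlg.{w}} (Φ : DoctrineHom P R) (X Y : C) :
    (Φ.functor.obj X ⨯ Φ.functor.obj Y) ⟶ Φ.functor.obj (X ⨯ Y) :=
  letI := Φ.preserves
  (PreservesLimitPair.iso Φ.functor X Y).inv

/-- The image of an element of `P (X ⨯ Y)` in `R (M X ⨯ M Y)`, transported along the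
canonical isomorphism `M (X ⨯ Y) ≅ M X ⨯ M Y`. -/
noncomputable def DoctrineHom.transProd {C : Type u₁} [Category.{v₁} C] [HasFiniteProducts C]
    {D : Type u₂} [Category.{v₂} D] [HasFiniteProducts D]
    {P : Cᵒᵖ ⥤ BoolAlg.{w}} {R : Dᵒᵖ ⥤ BoolAlg.{w}} (Φ : DoctrineHom P R) (X Y : C)
    (α : P.obj (op (X ⨯ Y))) : R.obj (op (Φ.functor.obj X ⨯ Φ.functor.obj Y)) :=
  R.map (Φ.prodPair X Y).op (Φ.trans.app (op (X ⨯ Y)) α)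

/-- A Boolean doctrine morphism between first-order Boolean doctrines is first-order when it
commutes with the universal quantifiers. -/
def DoctrineHom.IsFO {C : Type u₁} [Category.{v₁} C] [HasFiniteProducts C]
    {D : Type u₂} [Category.{v₂} D] [HasFiniteProducts D]
    {P : Cᵒᵖ ⥤ BoolAlg.{w}} {R : Dᵒᵖ ⥤ BoolAlg.{w}} (Φ : DoctrineHom P R)
    (foP : FOStructure P) (foR : FOStructure R) : Prop :=
  ∀ (X Y : C) (β : P.obj (op (X ⨯ Y))),
    (Φ.trans.app (op X) (foP.fa X Y β) : R.obj (op (Φ.functor.obj X))) =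
      foR.fa (Φ.functor.obj X) (Φ.functor.obj Y) (Φ.transProd X Y β)

/-- The Boolean doctrine morphism with identity functor part induced by a natural
transformation between two doctrines over the same base. -/
def idDoctrineHom {C : Type u₁} [Category.{v₁} C] {P Q : Cᵒᵖ ⥤ BoolAlg.{w}} (η : P ⟶ Q) :
    DoctrineHom P Q where
  functor := 𝟭 C
  preserves := inferInstance
  trans := η

/-- A quantifier completion of a Boolean doctrine `P`: a first-order Boolean doctrine `Q`
over the same base category together with a Boolean doctrine morphism `(𝟭 C, ι) : P ⟶ Q`
whose functor part is the identity, such that every Boolean doctrine morphism from `P` to a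
first-order Boolean doctrine factors uniquely through it via a first-order Boolean doctrine
morphism. -/
structure QuantifierCompletion.{w', v', u', v₁', u₁'} {C : Type u₁'} [Category.{v₁'} C]
    [HasFiniteProducts C] (P : Cᵒᵖ ⥤ BoolAlg.{w'}) where
  Q : Cᵒᵖ ⥤ BoolAlg.{w'}
  fo : FOStructure Q
  ι : P ⟶ Q
  univ : ∀ {D : Type u'} [Category.{v'} D] [HasFiniteProducts D]
      (R : Dᵒᵖ ⥤ BoolAlg.{w'}) (foR : FOStructure R) (Φ : DoctrineHom P R),
      ∃! Ψ : DoctrineHom Q R, Ψ.IsFO fo foR ∧ Φ = (idDoctrineHom ι).comp Ψ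

/-- A propositional model of a Boolean doctrine: a Boolean doctrine morphism to the
subsets doctrine. -/
abbrev PropModel {C : Type u} [Category.{v} C] (P : Cᵒᵖ ⥤ BoolAlg.{v}) :=
  DoctrineHom P subsetsDoctrine.{v}

/-- The subset of `M X` interpreting an element `α ∈ P X` in a propositional model. -/
def PropModel.interp {C : Type u} [Category.{v} C] {P : Cᵒᵖ ⥤ BoolAlg.{v}}
    (M : PropModel P) {X : C} (α : P.obj (op X)) : Set (M.functor.obj X) :=
  M.trans.app (op X) α



/-- The object map of a Boolean doctrine morphism. -/
abbrev DoctrineHom.onObj {C : Type u₁} [Category.{v₁} C] {D : Type u₂} [Category.{v₂} D]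
    {P : Cᵒᵖ ⥤ BoolAlg.{w}} {R : Dᵒᵖ ⥤ BoolAlg.{w}} (Φ : DoctrineHom P R) (X : C) : D :=
  Φ.functor.obj X

/-- The component at `X` of the natural transformation of a Boolean doctrine morphism,
applied to an element of the fiber. -/
abbrev DoctrineHom.appAt {C : Type u₁} [Category.{v₁} C] {D : Type u₂} [Category.{v₂} D]
    {P : Cᵒᵖ ⥤ BoolAlg.{w}} {R : Dᵒᵖ ⥤ BoolAlg.{w}} (Φ : DoctrineHom P R) (X : C)
    (a : P.obj (op X)) : R.obj (op (Φ.functor.obj X)) :=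
  Φ.trans.app (op X) a


/-! ### Auxiliary infrastructure -/

attribute [simp] prod.lift_fst prod.lift_snd prod.lift_fst_assoc prod.lift_snd_assoc

section Infrastructure

instance (X Y : BoolAlg) : BoundedLatticeHomClass (X ⟶ Y) X Y :=
  { map_sup := fun f => map_sup f.hom
    map_inf := fun f => map_inf f.hom
    map_top := fun f => map_top f.hom
    map_bot := fun f => map_bot f.hom }

lemma BA.comp_apply {X Y Z : BoolAlg} (f : X ⟶ Y) (g : Y ⟶ Z) (a : X) :
    (f ≫ g) a = g (f a) := rfl

lemma BA.id_apply {X : BoolAlg} (a : X) : (𝟙 X : X ⟶ X) a = a := rfl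

variable {C : Type u} [SmallCategory C] {Q : Cᵒᵖ ⥤ BoolAlg.{u}}

lemma Qmap_comp {A B D : C} (f : A ⟶ B) (g : B ⟶ D) (x : Q.obj (op D)) :
    Q.map (f ≫ g).op x = Q.map f.op (Q.map g.op x) := by
  rw [op_comp, Q.map_comp, BA.comp_apply]

lemma Qmap_id {A : C} (x : Q.obj (op A)) : Q.map (𝟙 A).op x = x := by
  rw [op_id, Q.map_id, BA.id_apply]

lemma Qmap_mono {A B : C} (f : A ⟶ B) {x y : Q.obj (op B)} (h : x ≤ y) :
    Q.map f.op x ≤ Q.map f.op y := OrderHomClass.mono _ h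

lemma Qmap_compl {A B : C} (f : A ⟶ B) (x : Q.obj (op B)) :
    Q.map f.op xᶜ = (Q.map f.op x)ᶜ := map_compl' _ _

end Infrastructure

section FOLemmas

variable {C : Type u} [SmallCategory C] [HasFiniteProducts C] {Q : Cᵒᵖ ⥤ BoolAlg.{u}}
  (fo : FOStructure Q)

lemma fa_counit (X Y : C) (b : Q.obj (op (X ⨯ Y))) :
    Q.map (prod.fst : X ⨯ Y ⟶ X).op (fo.fa X Y b) ≤ b := (fo.adj X Y _ b).1 le_rfl

lemma fa_mono (X Y : C) {b b' : Q.obj (op (X ⨯ Y))} (h : b ≤ b') :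
    fo.fa X Y b ≤ fo.fa X Y b' :=
  (fo.adj _ _ _ _).2 ((fa_counit fo X Y b).trans h)

lemma fa_top (X Y : C) : fo.fa X Y ⊤ = ⊤ := le_antisymm le_top ((fo.adj _ _ _ _).2 le_top)

lemma ex_le_iff (X Y : C) (b : Q.obj (op (X ⨯ Y))) (x : Q.obj (op X)) :
    fo.ex X Y b ≤ x ↔ b ≤ Q.map (prod.fst : X ⨯ Y ⟶ X).op x := by
  unfold FOStructure.ex
  rw [compl_le_iff_compl_le, fo.adj, Qmap_compl, compl_le_compl_iff_le]

lemma ex_unit (X Y : C) (b : Q.obj (op (X ⨯ Y))) :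
    b ≤ Q.map (prod.fst : X ⨯ Y ⟶ X).op (fo.ex X Y b) := (ex_le_iff fo X Y b _).1 le_rfl

lemma ex_mono (X Y : C) {b b' : Q.obj (op (X ⨯ Y))} (h : b ≤ b') :
    fo.ex X Y b ≤ fo.ex X Y b' :=
  (ex_le_iff fo X Y b _).2 (h.trans (ex_unit fo X Y b'))

lemma ex_bot (X Y : C) : fo.ex X Y ⊥ = ⊥ := by
  unfold FOStructure.ex
  rw [compl_bot, fa_top, compl_top]

lemma ex_compl_fa (X Y : C) (b : Q.obj (op (X ⨯ Y))) :
    fo.ex X Y bᶜ = (fo.fa X Y b)ᶜ := by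
  unfold FOStructure.ex
  rw [compl_compl]

lemma frobenius (X Y : C) (x : Q.obj (op X)) (b : Q.obj (op (X ⨯ Y))) :
    x ⊓ fo.ex X Y b = fo.ex X Y (Q.map (prod.fst : X ⨯ Y ⟶ X).op x ⊓ b) := by
  apply le_antisymm
  · rw [inf_comm, ← le_himp_iff, ex_le_iff, himp_eq, map_sup, Qmap_compl, ← himp_eq,
      le_himp_iff, inf_comm]
    exact ex_unit fo X Y _
  · refine le_inf ((ex_le_iff fo X Y _ _).2 inf_le_left) (ex_mono fo X Y inf_le_right)

lemma ex_bc (X X' Y : C) (f : X' ⟶ X) (b : Q.obj (op (X ⨯ Y))) :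
    Q.map f.op (fo.ex X Y b) = fo.ex X' Y (Q.map (prod.map f (𝟙 Y)).op b) := by
  unfold FOStructure.ex
  rw [Qmap_compl, fo.bc, Qmap_compl]

lemma fa_iso (X : C) {U U' : C} (m : X ⨯ U' ⟶ X ⨯ U) [IsIso m]
    (hm : m ≫ (prod.fst : X ⨯ U ⟶ X) = (prod.fst : X ⨯ U' ⟶ X))
    (b : Q.obj (op (X ⨯ U))) :
    fo.fa X U' (Q.map m.op b) = fo.fa X U b := by
  apply le_antisymm
  · refine (fo.adj _ _ _ _).2 ?_
    have h1 : (prod.fst : X ⨯ U ⟶ X) = inv m ≫ (prod.fst : X ⨯ U' ⟶ X) := by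
      rw [← hm, IsIso.inv_hom_id_assoc]
    rw [h1, Qmap_comp]
    have h2 := Qmap_mono (Q := Q) (inv m) ((fo.adj X U' (fo.fa X U' (Q.map m.op b)) _).1 le_rfl)
    refine h2.trans ?_
    rw [← Qmap_comp, IsIso.inv_hom_id, Qmap_id]
  · refine (fo.adj _ _ _ _).2 ?_
    rw [← hm, Qmap_comp]
    exact Qmap_mono m ((fo.adj X U (fo.fa X U b) b).1 le_rfl)

lemma ex_iso (X : C) {U U' : C} (m : X ⨯ U' ⟶ X ⨯ U) [IsIso m]
    (hm : m ≫ (prod.fst : X ⨯ U ⟶ X) = (prod.fst : X ⨯ U' ⟶ X))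
    (b : Q.obj (op (X ⨯ U))) :
    fo.ex X U' (Q.map m.op b) = fo.ex X U b := by
  unfold FOStructure.ex
  rw [← Qmap_compl, fa_iso fo X m hm]

lemma Qmap_iso_le_iff {A B : C} (m : A ⟶ B) [IsIso m] {u v : Q.obj (op B)} :
    Q.map m.op u ≤ Q.map m.op v ↔ u ≤ v := by
  constructor
  · intro h
    have := Qmap_mono (Q := Q) (inv m) h
    rwa [← Qmap_comp, ← Qmap_comp, IsIso.inv_hom_id, Qmap_id, Qmap_id] at this
  · exact Qmap_mono m

lemma fa_fa (S U V : C) (c : Q.obj (op ((S ⨯ U) ⨯ V))) :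
    fo.fa S U (fo.fa (S ⨯ U) V c) =
      fo.fa S (U ⨯ V) (Q.map (prod.associator S U V).inv.op c) := by
  have hcomp : (prod.associator S U V).hom ≫ (prod.fst : S ⨯ (U ⨯ V) ⟶ S)
      = (prod.fst : (S ⨯ U) ⨯ V ⟶ S ⨯ U) ≫ prod.fst := by simp
  apply le_antisymm
  · refine (fo.adj _ _ _ _).2 ?_
    rw [← Qmap_iso_le_iff (Q := Q) (prod.associator S U V).hom, ← Qmap_comp, ← Qmap_comp,
      Iso.hom_inv_id, Qmap_id, hcomp, Qmap_comp]
    exact (Qmap_mono _ (fa_counit fo S U _)).trans (fa_counit fo (S ⨯ U) V c)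
  · refine (fo.adj _ _ _ _).2 ((fo.adj _ _ _ _).2 ?_)
    rw [← Qmap_comp, ← hcomp]
    have := Qmap_mono (Q := Q) (prod.associator S U V).hom
      (fa_counit fo S (U ⨯ V) (Q.map (prod.associator S U V).inv.op c))
    rw [← Qmap_comp, ← Qmap_comp, Iso.hom_inv_id, Qmap_id] at this
    exact this

lemma ex_ex (S U V : C) (c : Q.obj (op ((S ⨯ U) ⨯ V))) :
    fo.ex S U (fo.ex (S ⨯ U) V c) =
      fo.ex S (U ⨯ V) (Q.map (prod.associator S U V).inv.op c) := by
  unfold FOStructure.ex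
  rw [compl_compl, fa_fa, Qmap_compl]

lemma ex_pair (S U V : C) (q : Q.obj (op (S ⨯ U))) (r : Q.obj (op (S ⨯ V))) :
    fo.ex S U q ⊓ fo.ex S V r =
      fo.ex S (U ⨯ V)
        (Q.map (prod.lift prod.fst (prod.snd ≫ prod.fst) : S ⨯ (U ⨯ V) ⟶ S ⨯ U).op q ⊓
          Q.map (prod.lift prod.fst (prod.snd ≫ prod.snd) : S ⨯ (U ⨯ V) ⟶ S ⨯ V).op r) := by
  rw [inf_comm, frobenius, ex_bc, inf_comm _ q, frobenius, ex_ex]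
  congr 1
  have e1 : (prod.associator S U V).inv ≫ (prod.fst : (S ⨯ U) ⨯ V ⟶ S ⨯ U)
      = prod.lift prod.fst (prod.snd ≫ prod.fst) := by simp
  have e2 : (prod.associator S U V).inv ≫ prod.map (prod.fst : S ⨯ U ⟶ S) (𝟙 V)
      = prod.lift prod.fst (prod.snd ≫ prod.snd) := by
    apply Limits.prod.hom_ext <;> simp
  rw [map_inf, ← Qmap_comp, ← Qmap_comp, e1, e2]


lemma ex_family (S : C) : ∀ (m : ℕ) (A : Fin m → C) (q : ∀ r, Q.obj (op (S ⨯ A r)))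
    (x : Q.obj (op S)), (∀ r, x ≤ fo.ex S (A r) (q r)) →
    x ≤ fo.ex S (∏ᶜ A)
      (Finset.univ.inf fun r =>
        Q.map (prod.lift prod.fst (prod.snd ≫ Pi.π A r) : S ⨯ ∏ᶜ A ⟶ S ⨯ A r).op (q r)) := by
  intro m
  induction m with
  | zero =>
    intro A q x _
    have hbot : fo.fa S (∏ᶜ A) (⊥ : Q.obj (op (S ⨯ ∏ᶜ A))) = ⊥ := by
      refine le_antisymm ?_ bot_le
      have hs : (prod.lift (𝟙 S) (Pi.lift fun r => r.elim0) : S ⟶ S ⨯ ∏ᶜ A) ≫ prod.fst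
          = 𝟙 S := prod.lift_fst _ _
      calc fo.fa S (∏ᶜ A) ⊥
          = Q.map ((prod.lift (𝟙 S) (Pi.lift fun r => r.elim0) : S ⟶ S ⨯ ∏ᶜ A) ≫
              prod.fst).op (fo.fa S (∏ᶜ A) ⊥) := by rw [hs, Qmap_id]
        _ ≤ Q.map (prod.lift (𝟙 S) (Pi.lift fun r => r.elim0) : S ⟶ S ⨯ ∏ᶜ A).op ⊥ := by
              rw [Qmap_comp]; exact Qmap_mono _ (fa_counit fo _ _ _)
        _ = ⊥ := map_bot _
    have htop : fo.ex S (∏ᶜ A) (⊤ : Q.obj (op (S ⨯ ∏ᶜ A))) = ⊤ := by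
      unfold FOStructure.ex
      rw [compl_top, hbot, compl_bot]
    rw [Finset.univ_eq_empty, Finset.inf_empty, htop]
    exact le_top
  | succ m ih =>
    intro A q x hx
    set A' : Fin m → C := fun r => A r.succ with hA'
    set ψ : ∏ᶜ A ⟶ A 0 ⨯ ∏ᶜ A' :=
      prod.lift (Pi.π A 0) (Pi.lift fun r => Pi.π A r.succ) with hψ
    set χ : A 0 ⨯ ∏ᶜ A' ⟶ ∏ᶜ A :=
      Pi.lift (fun j => Fin.cases (motive := fun j => A 0 ⨯ ∏ᶜ A' ⟶ A j) prod.fst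
        (fun r => prod.snd ≫ Pi.π A' r) j) with hχ
    have hψχ : ψ ≫ χ = 𝟙 _ := by
      apply Pi.hom_ext
      intro j
      induction j using Fin.cases with
      | zero => simp [hψ, hχ]
      | succ r => simp [hψ, hχ]
    have hχψ : χ ≫ ψ = 𝟙 _ := by
      apply Limits.prod.hom_ext
      · simp [hψ, hχ]
      · apply Pi.hom_ext
        intro r
        simp [hψ, hχ]
    haveI hiso : IsIso ψ := ⟨χ, hψχ, hχψ⟩
    set m' : S ⨯ ∏ᶜ A ⟶ S ⨯ (A 0 ⨯ ∏ᶜ A') := prod.map (𝟙 S) ψ with hm'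
    haveI : IsIso m' := by
      refine ⟨prod.map (𝟙 S) χ, ?_, ?_⟩ <;>
        rw [hm', prod.map_map, Category.id_comp] <;> simp [hψχ, hχψ]
    have hmfst : m' ≫ (prod.fst : S ⨯ (A 0 ⨯ ∏ᶜ A') ⟶ S) = prod.fst := by
      simp [hm']
    have hrest := ih A' (fun r => q r.succ) x (fun r => hx r.succ)
    have step := le_inf (hx 0) hrest
    rw [ex_pair] at step
    rw [← ex_iso fo S m' hmfst] at step
    refine step.trans (le_of_eq ?_)
    congr 1
    rw [map_inf, ← Qmap_comp]
    have e0 : m' ≫ (prod.lift prod.fst (prod.snd ≫ prod.fst) :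
        S ⨯ (A 0 ⨯ ∏ᶜ A') ⟶ S ⨯ A 0) =
        prod.lift prod.fst (prod.snd ≫ Pi.π A 0) := by
      apply Limits.prod.hom_ext <;> simp [hm', hψ]
    have e1 : ∀ r : Fin m, (m' ≫ (prod.lift prod.fst (prod.snd ≫ prod.snd) :
        S ⨯ (A 0 ⨯ ∏ᶜ A') ⟶ S ⨯ ∏ᶜ A')) ≫
          (prod.lift prod.fst (prod.snd ≫ Pi.π A' r) : S ⨯ ∏ᶜ A' ⟶ S ⨯ A' r) =
        prod.lift prod.fst (prod.snd ≫ Pi.π A r.succ) := by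
      intro r
      apply Limits.prod.hom_ext <;> simp +zetaDelta [hm', hψ]
    rw [e0]
    have e2 : Q.map m'.op (Q.map ((prod.lift prod.fst (prod.snd ≫ prod.snd) :
          S ⨯ (A 0 ⨯ ∏ᶜ A') ⟶ S ⨯ ∏ᶜ A')).op
        (Finset.univ.inf fun r =>
          Q.map (prod.lift prod.fst (prod.snd ≫ Pi.π A' r) : S ⨯ ∏ᶜ A' ⟶ S ⨯ A' r).op
            (q r.succ))) =
        Finset.univ.inf fun r : Fin m =>
          Q.map (prod.lift prod.fst (prod.snd ≫ Pi.π A r.succ) : S ⨯ ∏ᶜ A ⟶ S ⨯ A r.succ).op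
            (q r.succ) := by
      rw [← Qmap_comp, map_finset_inf]
      refine Finset.inf_congr rfl fun r _ => ?_
      simp only [Function.comp]
      rw [← Qmap_comp, e1 r]
    rw [e2, Fin.univ_succ, Finset.inf_cons, Finset.inf_map]
    rfl


lemma fa_inst (X Y E : C) (b : Q.obj (op (X ⨯ Y))) (g : X ⨯ E ⟶ Y) :
    Q.map (prod.fst : X ⨯ E ⟶ X).op (fo.fa X Y b) ≤ Q.map (prod.lift prod.fst g).op b := by
  have h : (prod.lift prod.fst g : X ⨯ E ⟶ X ⨯ Y) ≫ prod.fst = prod.fst := prod.lift_fst _ _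
  conv_lhs => rw [← h]
  rw [Qmap_comp]
  exact Qmap_mono _ (fa_counit fo X Y b)

lemma fa_compl_ex (X Y : C) (b : Q.obj (op (X ⨯ Y))) :
    (fo.ex X Y b)ᶜ = fo.fa X Y bᶜ := by
  unfold FOStructure.ex
  rw [compl_compl]

end FOLemmas




/-- Boolean prime filter theorem: every proper filter extends to an ultrafilter. -/
lemma exists_ultrafilter_extending {B : Type w} [BooleanAlgebra B] (F0 : Set B)
    (htop : (⊤ : B) ∈ F0) (hinf : ∀ a b : B, a ∈ F0 → b ∈ F0 → a ⊓ b ∈ F0)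
    (hup : ∀ a b : B, a ∈ F0 → a ≤ b → b ∈ F0) (hproper : (⊥ : B) ∉ F0) :
    ∃ U : Set B, F0 ⊆ U ∧ (∀ a b : B, a ∈ U → b ∈ U → a ⊓ b ∈ U) ∧
      (∀ a b : B, a ∈ U → a ≤ b → b ∈ U) ∧ (⊥ : B) ∉ U ∧ ∀ a : B, a ∈ U ∨ aᶜ ∈ U := by
  classical
  set S : Set (Set B) := {F | (⊤ : B) ∈ F ∧ (∀ a b : B, a ∈ F → b ∈ F → a ⊓ b ∈ F) ∧
    (∀ a b : B, a ∈ F → a ≤ b → b ∈ F) ∧ (⊥ : B) ∉ F ∧ F0 ⊆ F} with hS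
  have hF0 : F0 ∈ S := ⟨htop, hinf, hup, hproper, subset_rfl⟩
  have chain : ∀ c ⊆ S, IsChain (· ⊆ ·) c → c.Nonempty → ∃ ub ∈ S, ∀ s ∈ c, s ⊆ ub := by
    intro c hcS hchain hcne
    refine ⟨⋃₀ c, ⟨?_, ?_, ?_, ?_, ?_⟩, fun s hs => Set.subset_sUnion_of_mem hs⟩
    · obtain ⟨s, hs⟩ := hcne
      exact ⟨s, hs, (hcS hs).1⟩
    · rintro a b ⟨s, hs, has⟩ ⟨t, ht, hbt⟩
      rcases hchain.total hs ht with hst | hts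
      · exact ⟨t, ht, (hcS ht).2.1 a b (hst has) hbt⟩
      · exact ⟨s, hs, (hcS hs).2.1 a b has (hts hbt)⟩
    · rintro a b ⟨s, hs, has⟩ hab
      exact ⟨s, hs, (hcS hs).2.2.1 a b has hab⟩
    · rintro ⟨s, hs, hbot⟩
      exact (hcS hs).2.2.2.1 hbot
    · obtain ⟨s, hs⟩ := hcne
      exact (hcS hs).2.2.2.2.trans (Set.subset_sUnion_of_mem hs)
  obtain ⟨U, hF0U, hUmax⟩ := zorn_subset_nonempty S chain F0 hF0
  obtain ⟨hUtop, hUinf, hUup, hUbot, hUF0⟩ := hUmax.prop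
  refine ⟨U, hF0U, hUinf, hUup, hUbot, fun a => ?_⟩
  by_contra hcon
  push_neg at hcon
  obtain ⟨ha, hac⟩ := hcon
  set F' : Set B := {x | ∃ u ∈ U, u ⊓ a ≤ x} with hF'
  have hUF' : U ⊆ F' := fun u hu => ⟨u, hu, inf_le_left⟩
  have haF' : a ∈ F' := ⟨⊤, hUtop, inf_le_right⟩
  have hbotF' : (⊥ : B) ∉ F' := by
    rintro ⟨u, hu, hle⟩
    exact hac (hUup u aᶜ hu (le_compl_iff_disjoint_right.2 (disjoint_iff.2 (le_bot_iff.1 hle))))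
  have hF'S : F' ∈ S := by
    refine ⟨⟨⊤, hUtop, inf_le_left.trans le_top⟩, ?_, ?_, hbotF', hUF0.trans hUF'⟩
    · rintro x y ⟨u, hu, hux⟩ ⟨v, hv, hvy⟩
      exact ⟨u ⊓ v, hUinf u v hu hv,
        le_inf (le_trans (inf_le_inf_right a inf_le_left) hux)
          (le_trans (inf_le_inf_right a inf_le_right) hvy)⟩
    · rintro x y ⟨u, hu, hux⟩ hxy
      exact ⟨u, hu, hux.trans hxy⟩
  have hEq : F' = U := hUmax.eq_of_ge hF'S hUF'
  exact ha (hEq ▸ haF')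



section SubsetsFO

/-- View an element of a fiber of the subsets doctrine as a set. -/
def tS {A : Type v} (σ : subsetsDoctrine.obj (op A)) : Set A := σ

lemma tS_le {A : Type v} {σ τ : subsetsDoctrine.obj (op A)} : σ ≤ τ ↔ tS σ ⊆ tS τ := Iff.rfl

lemma mem_tS_inf {A : Type v} {σ τ : subsetsDoctrine.obj (op A)} {x : A} :
    x ∈ tS (σ ⊓ τ) ↔ x ∈ tS σ ∧ x ∈ tS τ := Iff.rfl

lemma mem_tS_sup {A : Type v} {σ τ : subsetsDoctrine.obj (op A)} {x : A} :
    x ∈ tS (σ ⊔ τ) ↔ x ∈ tS σ ∨ x ∈ tS τ := Iff.rfl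

lemma mem_tS_compl {A : Type v} {σ : subsetsDoctrine.obj (op A)} {x : A} :
    x ∈ tS σᶜ ↔ x ∉ tS σ := Iff.rfl

lemma mem_tS_finsetInf {A : Type v} {ι : Type*} [DecidableEq ι] {s : Finset ι}
    {f : ι → subsetsDoctrine.obj (op A)} {x : A} :
    x ∈ tS (s.inf f) ↔ ∀ i ∈ s, x ∈ tS (f i) := by
  induction s using Finset.cons_induction with
  | empty => exact ⟨fun _ i hi => by simp at hi, fun _ => trivial⟩
  | cons a s ha ih =>
    rw [Finset.inf_cons]
    simp only [Finset.mem_cons]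
    constructor
    · rintro ⟨h1, h2⟩ i (rfl | hi)
      · exact h1
      · exact ih.1 h2 i hi
    · intro h
      exact ⟨h a (Or.inl rfl), ih.2 fun i hi => h i (Or.inr hi)⟩

lemma mem_tS_finsetSup {A : Type v} {ι : Type*} [DecidableEq ι] {s : Finset ι}
    {f : ι → subsetsDoctrine.obj (op A)} {x : A} :
    x ∈ tS (s.sup f) ↔ ∃ i ∈ s, x ∈ tS (f i) := by
  induction s using Finset.cons_induction with
  | empty => simp [tS]; exact fun h => h.elim
  | cons a s ha ih =>
    rw [Finset.sup_cons]
    simp only [Finset.mem_cons]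
    constructor
    · rintro (h1 | h2)
      · exact ⟨a, Or.inl rfl, h1⟩
      · obtain ⟨i, hi, hx⟩ := ih.1 h2
        exact ⟨i, Or.inr hi, hx⟩
    · rintro ⟨i, (rfl | hi), hx⟩
      · exact Or.inl hx
      · exact Or.inr (ih.2 ⟨i, hi, hx⟩)

lemma mem_tS_map {A B : Type v} (f : A ⟶ B) (σ : subsetsDoctrine.obj (op B)) (x : A) :
    x ∈ tS (subsetsDoctrine.map f.op σ) ↔ f x ∈ tS σ := Iff.rfl

/-- Pairing of elements of a binary product in `Type`. -/
noncomputable def pairEl {X Y : Type v} (x : X) (y : Y) : X ⨯ Y :=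
  (Types.binaryProductIso X Y).inv (x, y)

lemma fst_pairEl {X Y : Type v} (x : X) (y : Y) :
    (Limits.prod.fst : X ⨯ Y ⟶ X) (pairEl x y) = x :=
  by simp [pairEl]

lemma snd_pairEl {X Y : Type v} (x : X) (y : Y) :
    (Limits.prod.snd : X ⨯ Y ⟶ Y) (pairEl x y) = y :=
  by simp [pairEl]

lemma pairEl_eta {X Y : Type v} (p : X ⨯ Y) :
    pairEl ((Limits.prod.fst : X ⨯ Y ⟶ X) p) ((Limits.prod.snd : X ⨯ Y ⟶ Y) p) = p := by
  have h1 : ((Types.binaryProductIso X Y).hom p).1 = (Limits.prod.fst : X ⨯ Y ⟶ X) p :=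
    Types.binaryProductIso_hom_comp_fst_apply X Y p
  have h2 : ((Types.binaryProductIso X Y).hom p).2 = (Limits.prod.snd : X ⨯ Y ⟶ Y) p :=
    Types.binaryProductIso_hom_comp_snd_apply X Y p
  have : ((Limits.prod.fst : X ⨯ Y ⟶ X) p, (Limits.prod.snd : X ⨯ Y ⟶ Y) p)
      = (Types.binaryProductIso X Y).hom p := by
    rw [← h1, ← h2]
  rw [pairEl, this]
  exact ConcreteCategory.congr_hom (Types.binaryProductIso X Y).hom_inv_id p

lemma prodTypeExt {X Y : Type v} (p q : X ⨯ Y)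
    (h1 : (Limits.prod.fst : X ⨯ Y ⟶ X) p = (Limits.prod.fst : X ⨯ Y ⟶ X) q)
    (h2 : (Limits.prod.snd : X ⨯ Y ⟶ Y) p = (Limits.prod.snd : X ⨯ Y ⟶ Y) q) : p = q := by
  rw [← pairEl_eta p, ← pairEl_eta q, h1, h2]

/-- The first-order structure on the subsets doctrine. -/
noncomputable def subFO : FOStructure subsetsDoctrine.{v} where
  fa X Y σ := {x | ∀ p : X ⨯ Y, (Limits.prod.fst : X ⨯ Y ⟶ X) p = x → p ∈ tS σ}
  adj X Y σ τ := by
    constructor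
    · intro h p hp
      exact h hp _ rfl
    · intro h x hx p hpx
      exact h (show (Limits.prod.fst : X ⨯ Y ⟶ X) p ∈ tS σ by rw [hpx]; exact hx)
  bc X X' Y f τ := by
    apply Set.ext
    intro x'
    constructor
    · intro hx' q hq
      have h3 : (Limits.prod.fst : X ⨯ Y ⟶ X) ((prod.map f (𝟙 Y) : X' ⨯ Y ⟶ X ⨯ Y) q)
          = f ((Limits.prod.fst : X' ⨯ Y ⟶ X') q) := ConcreteCategory.congr_hom (prod.map_fst f (𝟙 Y)) q
      have hfst : (Limits.prod.fst : X ⨯ Y ⟶ X) ((prod.map f (𝟙 Y) : X' ⨯ Y ⟶ X ⨯ Y) q)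
          = f x' := by rw [h3, hq]
      exact hx' _ hfst
    · intro hx' p hp
      have hq : (Limits.prod.fst : X' ⨯ Y ⟶ X')
          (pairEl x' ((Limits.prod.snd : X ⨯ Y ⟶ Y) p)) = x' := fst_pairEl _ _
      have hmem := hx' _ hq
      have heq : (prod.map f (𝟙 Y) : X' ⨯ Y ⟶ X ⨯ Y)
          (pairEl x' ((Limits.prod.snd : X ⨯ Y ⟶ Y) p)) = p := by
        apply prodTypeExt
        · have h3 : (Limits.prod.fst : X ⨯ Y ⟶ X)
              ((prod.map f (𝟙 Y) : X' ⨯ Y ⟶ X ⨯ Y)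
                (pairEl x' ((Limits.prod.snd : X ⨯ Y ⟶ Y) p)))
              = f ((Limits.prod.fst : X' ⨯ Y ⟶ X')
                  (pairEl x' ((Limits.prod.snd : X ⨯ Y ⟶ Y) p))) :=
            ConcreteCategory.congr_hom (prod.map_fst f (𝟙 Y)) _
          rw [h3, fst_pairEl, hp]
          rfl
        · have h4 : (Limits.prod.snd : X ⨯ Y ⟶ Y)
              ((prod.map f (𝟙 Y) : X' ⨯ Y ⟶ X ⨯ Y)
                (pairEl x' ((Limits.prod.snd : X ⨯ Y ⟶ Y) p)))
              = (𝟙 Y) ((Limits.prod.snd : X' ⨯ Y ⟶ Y)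
                  (pairEl x' ((Limits.prod.snd : X ⨯ Y ⟶ Y) p))) :=
            ConcreteCategory.congr_hom (prod.map_snd f (𝟙 Y)) _
          rw [h4, types_id_apply, snd_pairEl]
      show p ∈ tS τ
      rw [← heq]
      exact hmem

end SubsetsFO



section Model

variable {B : Type w} [BooleanAlgebra B] (U : Set B)

lemma U_compl_iff (hUinf : ∀ a b : B, a ∈ U → b ∈ U → a ⊓ b ∈ U)
    (hUup : ∀ a b : B, a ∈ U → a ≤ b → b ∈ U) (hUbot : (⊥ : B) ∉ U)
    (hUultra : ∀ a : B, a ∈ U ∨ aᶜ ∈ U) (a : B) : aᶜ ∈ U ↔ a ∉ U := by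
  constructor
  · intro hc ha
    exact hUbot (hUup _ _ (hUinf _ _ ha hc) (le_of_eq inf_compl_eq_bot))
  · intro ha
    rcases hUultra a with h | h
    · exact absurd h ha
    · exact h

lemma U_top_mem (hUbot : (⊥ : B) ∉ U) (hUultra : ∀ a : B, a ∈ U ∨ aᶜ ∈ U) :
    (⊤ : B) ∈ U := by
  rcases hUultra ⊤ with h | h
  · exact h
  · rw [compl_top] at h
    exact absurd h hUbot

lemma U_sup_iff (hUinf : ∀ a b : B, a ∈ U → b ∈ U → a ⊓ b ∈ U)
    (hUup : ∀ a b : B, a ∈ U → a ≤ b → b ∈ U) (hUbot : (⊥ : B) ∉ U)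
    (hUultra : ∀ a : B, a ∈ U ∨ aᶜ ∈ U) (a b : B) : a ⊔ b ∈ U ↔ a ∈ U ∨ b ∈ U := by
  constructor
  · intro hab
    by_contra hcon
    push_neg at hcon
    have hac := (U_compl_iff U hUinf hUup hUbot hUultra a).2 hcon.1
    have hbc := (U_compl_iff U hUinf hUup hUbot hUultra b).2 hcon.2
    have := hUinf _ _ hab (hUinf _ _ hac hbc)
    rw [← compl_sup, inf_compl_eq_bot] at this
    exact hUbot this
  · rintro (h | h)
    · exact hUup _ _ h le_sup_left
    · exact hUup _ _ h le_sup_right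

end Model

section ModelHom

variable {C : Type u} [SmallCategory C] [HasFiniteProducts C] (P : Cᵒᵖ ⥤ BoolAlg.{u}) (T : C)
  (U : Set (P.obj (op T)))
  (hUinf : ∀ a b : P.obj (op T), a ∈ U → b ∈ U → a ⊓ b ∈ U)
  (hUup : ∀ a b : P.obj (op T), a ∈ U → a ≤ b → b ∈ U)
  (hUbot : (⊥ : P.obj (op T)) ∉ U)
  (hUultra : ∀ a : P.obj (op T), a ∈ U ∨ aᶜ ∈ U)

/-- The propositional model of `P` determined by an ultrafilter on `P(T)`, with carrier
the representable functor at `T`. -/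
noncomputable def modelHom : DoctrineHom P subsetsDoctrine.{u} where
  functor := coyoneda.obj (op T)
  preserves := inferInstance
  trans :=
    { app := fun X => BoolAlg.ofHom
        { toFun := fun a => {f : T ⟶ X.unop | P.map f.op a ∈ U}
          map_sup' := fun a b => Set.ext fun f => by
            show P.map f.op (a ⊔ b) ∈ U ↔ _
            rw [map_sup]
            exact (U_sup_iff U hUinf hUup hUbot hUultra _ _).trans Iff.rfl
          map_inf' := fun a b => Set.ext fun f => by
            show P.map f.op (a ⊓ b) ∈ U ↔ _
            rw [map_inf]
            constructor
            · intro h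
              exact ⟨hUup _ _ h inf_le_left, hUup _ _ h inf_le_right⟩
            · rintro ⟨h1, h2⟩
              exact hUinf _ _ h1 h2
          map_top' := Set.ext fun f => by
            show P.map f.op ⊤ ∈ U ↔ _
            rw [map_top]
            exact iff_of_true (U_top_mem U hUbot hUultra) trivial
          map_bot' := Set.ext fun f => by
            show P.map f.op ⊥ ∈ U ↔ _
            rw [map_bot]
            exact iff_of_false hUbot (fun h => h) }
      naturality := by
        intro X X' gm
        apply DFunLike.ext
        intro a
        refine Set.ext fun f => ?_
        show P.map f.op (P.map gm a) ∈ U ↔ P.map (f ≫ gm.unop).op a ∈ U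
        rw [show (f ≫ gm.unop).op = gm ≫ f.op from rfl, P.map_comp, BA.comp_apply] }

end ModelHom

section Transport

variable {C : Type u} [SmallCategory C]

lemma cast_mem_trans {P : Cᵒᵖ ⥤ BoolAlg.{u}} {F G : C ⥤ Type u} (hFG : F = G)
    (η : P ⟶ F.op ⋙ subsetsDoctrine.{u}) (θ : P ⟶ G.op ⋙ subsetsDoctrine.{u})
    (hηθ : HEq η θ) (X : C) (a : P.obj (op X)) (x : F.obj X) (hobj : F.obj X = G.obj X) :
    cast hobj x ∈ tS (θ.app (op X) a) ↔ x ∈ tS (η.app (op X) a) := by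
  subst hFG
  cases eq_of_heq hηθ
  exact Iff.rfl

lemma cast_map {F G : C ⥤ Type u} (hFG : F = G) {A B' : C} (f : A ⟶ B') (x : F.obj A)
    (hA : F.obj A = G.obj A) (hB : F.obj B' = G.obj B') :
    G.map f (cast hA x) = cast hB (F.map f x) := by
  subst hFG
  rfl

end Transport



section Folds

variable {A : Type w} [Lattice A] [BoundedOrder A]

lemma foldr_inf_append (l₁ l₂ : List A) :
    (l₁ ++ l₂).foldr (· ⊓ ·) ⊤ = l₁.foldr (· ⊓ ·) ⊤ ⊓ l₂.foldr (· ⊓ ·) ⊤ := by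
  induction l₁ with
  | nil => simp
  | cons a l ih => simp [ih, inf_assoc]

lemma foldr_sup_append (l₁ l₂ : List A) :
    (l₁ ++ l₂).foldr (· ⊔ ·) ⊥ = l₁.foldr (· ⊔ ·) ⊥ ⊔ l₂.foldr (· ⊔ ·) ⊥ := by
  induction l₁ with
  | nil => simp
  | cons a l ih => simp [ih, sup_assoc]

lemma foldr_inf_eq_inf_get {ι : Type v} (L : List ι) (f : ι → A) :
    (L.map f).foldr (· ⊓ ·) ⊤ = Finset.univ.inf (fun t : Fin L.length => f (L.get t)) := by
  induction L with
  | nil => simp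
  | cons a L ih =>
    rw [List.map_cons, List.foldr_cons, ih, Fin.univ_succ, Finset.inf_cons, Finset.inf_map]
    rfl

lemma foldr_sup_eq_sup_get {ι : Type v} (L : List ι) (f : ι → A) :
    (L.map f).foldr (· ⊔ ·) ⊥ = Finset.univ.sup (fun t : Fin L.length => f (L.get t)) := by
  induction L with
  | nil => simp
  | cons a L ih =>
    rw [List.map_cons, List.foldr_cons, ih, Fin.univ_succ, Finset.sup_cons, Finset.sup_map]
    rfl

end Folds


lemma aux_bot {A : Type*} [BooleanAlgebra A] {x a b s t : A}
    (ha : x ≤ a) (hb : x ≤ b) (hs : x ≤ sᶜ) (ht : x ≤ tᶜ) (h : a ⊓ b ≤ s ⊔ t) : x ≤ ⊥ :=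
  calc x ≤ ((a ⊓ b) ⊓ sᶜ) ⊓ tᶜ := le_inf (le_inf (le_inf ha hb) hs) ht
  _ ≤ ((s ⊔ t) ⊓ sᶜ) ⊓ tᶜ := inf_le_inf_right _ (inf_le_inf_right _ h)
  _ = ⊥ := by rw [inf_assoc, ← compl_sup, inf_compl_eq_bot]

set_option maxHeartbeats 2000000 in

/-- The backward (easy) direction of the doctrinal Herbrand theorem. -/
lemma stmt5_mpr {C : Type u} [SmallCategory C] [HasFiniteProducts C]
    (P : Cᵒᵖ ⥤ BoolAlg.{u}) (qc : QuantifierCompletion.{u, u, u + 1, u, u} P)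
    {ibar hbar jbar kbar : ℕ} (S : C) (Y : Fin ibar → C) (W : Fin hbar → C)
    (Z : Fin jbar → C) (V : Fin kbar → C)
    (α : ∀ i, P.obj (op (S ⨯ Y i))) (γ : ∀ h, P.obj (op (S ⨯ W h)))
    (β : ∀ j, P.obj (op (S ⨯ Z j))) (δ : ∀ k, P.obj (op (S ⨯ V k)))
    (n n' : ℕ) (l : Fin n → Fin ibar) (l' : Fin n' → Fin kbar)
    (g : ∀ i : Fin n, (S ⨯ ((∏ᶜ Z) ⨯ (∏ᶜ W))) ⟶ Y (l i))
    (g' : ∀ k : Fin n', (S ⨯ ((∏ᶜ Z) ⨯ (∏ᶜ W))) ⟶ V (l' k))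
    (h2 : (Finset.univ.inf fun i =>
            P.map (prod.lift (prod.fst : S ⨯ ((∏ᶜ Z) ⨯ (∏ᶜ W)) ⟶ S) (g i)).op (α (l i))) ⊓
          (Finset.univ.inf fun h =>
            P.map (prod.lift (prod.fst : S ⨯ ((∏ᶜ Z) ⨯ (∏ᶜ W)) ⟶ S)
              ((prod.snd : S ⨯ ((∏ᶜ Z) ⨯ (∏ᶜ W)) ⟶ (∏ᶜ Z) ⨯ (∏ᶜ W)) ≫
                (prod.snd : (∏ᶜ Z) ⨯ (∏ᶜ W) ⟶ ∏ᶜ W) ≫ Pi.π W h)).op (γ h)) ≤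
        (Finset.univ.sup fun j =>
            P.map (prod.lift (prod.fst : S ⨯ ((∏ᶜ Z) ⨯ (∏ᶜ W)) ⟶ S)
              ((prod.snd : S ⨯ ((∏ᶜ Z) ⨯ (∏ᶜ W)) ⟶ (∏ᶜ Z) ⨯ (∏ᶜ W)) ≫
                (prod.fst : (∏ᶜ Z) ⨯ (∏ᶜ W) ⟶ ∏ᶜ Z) ≫ Pi.π Z j)).op (β j)) ⊔
          Finset.univ.sup fun k =>
            P.map (prod.lift (prod.fst : S ⨯ ((∏ᶜ Z) ⨯ (∏ᶜ W)) ⟶ S) (g' k)).op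
              (δ (l' k))) :
    (Finset.univ.inf fun i => qc.fo.fa S (Y i) (qc.ι.app (op (S ⨯ Y i)) (α i))) ⊓
        (Finset.univ.inf fun h => qc.fo.ex S (W h) (qc.ι.app (op (S ⨯ W h)) (γ h))) ≤
      (Finset.univ.sup fun j => qc.fo.fa S (Z j) (qc.ι.app (op (S ⨯ Z j)) (β j))) ⊔
        Finset.univ.sup fun k => qc.fo.ex S (V k) (qc.ι.app (op (S ⨯ V k)) (δ k)) := by
  classical
  have ιnat : ∀ {X X' : C} (f : X ⟶ X') (a : P.obj (op X')),
      DFunLike.coe (qc.ι.app (op X)) (P.map f.op a) = qc.Q.map f.op (qc.ι.app (op X') a) := by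
    intro X X' f a
    exact congrArg (fun (m : P.obj (op X') ⟶ qc.Q.obj (op X)) => m a) (qc.ι.naturality f.op)
  -- push `ι` through the Herbrand inequality
  have h2' := OrderHomClass.mono (qc.ι.app (op (S ⨯ ((∏ᶜ Z) ⨯ (∏ᶜ W))))) h2
  rw [map_inf, map_sup, map_finset_inf, map_finset_inf, map_finset_sup, map_finset_sup] at h2'
  unfold Function.comp at h2'
  simp only [ιnat] at h2'
  -- Boolean reduction of the goal
  rw [← sdiff_eq_bot_iff, sdiff_eq]
  refine le_antisymm ?_ bot_le
  set X0 := ((Finset.univ.inf fun i => qc.fo.fa S (Y i) (qc.ι.app (op (S ⨯ Y i)) (α i))) ⊓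
        (Finset.univ.inf fun h => qc.fo.ex S (W h) (qc.ι.app (op (S ⨯ W h)) (γ h)))) ⊓
      ((Finset.univ.sup fun j => qc.fo.fa S (Z j) (qc.ι.app (op (S ⨯ Z j)) (β j))) ⊔
        Finset.univ.sup fun k => qc.fo.ex S (V k) (qc.ι.app (op (S ⨯ V k)) (δ k)))ᶜ
    with hX0
  have hX0A : ∀ i : Fin ibar, X0 ≤ qc.fo.fa S (Y i) (qc.ι.app (op (S ⨯ Y i)) (α i)) :=
    fun i => (inf_le_left.trans inf_le_left).trans (Finset.inf_le (Finset.mem_univ i))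
  have hX0C : ∀ h : Fin hbar, X0 ≤ qc.fo.ex S (W h) (qc.ι.app (op (S ⨯ W h)) (γ h)) :=
    fun h => (inf_le_left.trans inf_le_right).trans (Finset.inf_le (Finset.mem_univ h))
  have hX0BD : X0 ≤
      ((Finset.univ.sup fun j => qc.fo.fa S (Z j) (qc.ι.app (op (S ⨯ Z j)) (β j))) ⊔
        Finset.univ.sup fun k => qc.fo.ex S (V k) (qc.ι.app (op (S ⨯ V k)) (δ k)))ᶜ :=
    inf_le_right
  have hX0B : ∀ j : Fin jbar, X0 ≤ (qc.fo.fa S (Z j) (qc.ι.app (op (S ⨯ Z j)) (β j)))ᶜ := by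
    intro j
    refine hX0BD.trans ?_
    rw [compl_sup]
    refine inf_le_left.trans ?_
    rw [Finset.compl_sup]
    exact Finset.inf_le (Finset.mem_univ j)
  have hX0D : ∀ k : Fin kbar, X0 ≤ (qc.fo.ex S (V k) (qc.ι.app (op (S ⨯ V k)) (δ k)))ᶜ := by
    intro k
    refine hX0BD.trans ?_
    rw [compl_sup]
    refine inf_le_right.trans ?_
    rw [Finset.compl_sup]
    exact Finset.inf_le (Finset.mem_univ k)
  -- combine the existential statements over the big product
  have hZex : ∀ j : Fin jbar, X0 ≤ qc.fo.ex S (Z j) ((qc.ι.app (op (S ⨯ Z j)) (β j))ᶜ) :=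
    fun j => (hX0B j).trans_eq (ex_compl_fa qc.fo S (Z j) _).symm
  have hWW := ex_family qc.fo S hbar W (fun h => qc.ι.app (op (S ⨯ W h)) (γ h)) X0 hX0C
  have hZZ := ex_family qc.fo S jbar Z (fun j => (qc.ι.app (op (S ⨯ Z j)) (β j))ᶜ) X0 hZex
  have hE := (le_inf hZZ hWW).trans (le_of_eq (ex_pair qc.fo S (∏ᶜ Z) (∏ᶜ W) _ _))
  have hfrob := (le_inf le_rfl hE).trans
    (le_of_eq (frobenius qc.fo S ((∏ᶜ Z) ⨯ (∏ᶜ W)) X0 _))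
  -- the inner inequality
  have hinner : qc.Q.map (prod.fst : S ⨯ ((∏ᶜ Z) ⨯ (∏ᶜ W)) ⟶ S).op X0 ⊓
      (qc.Q.map (prod.lift prod.fst (prod.snd ≫ prod.fst) :
          S ⨯ ((∏ᶜ Z) ⨯ (∏ᶜ W)) ⟶ S ⨯ ∏ᶜ Z).op
        (Finset.univ.inf fun j =>
          qc.Q.map (prod.lift prod.fst (prod.snd ≫ Pi.π Z j) : S ⨯ ∏ᶜ Z ⟶ S ⨯ Z j).op
            ((qc.ι.app (op (S ⨯ Z j)) (β j))ᶜ)) ⊓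
       qc.Q.map (prod.lift prod.fst (prod.snd ≫ prod.snd) :
          S ⨯ ((∏ᶜ Z) ⨯ (∏ᶜ W)) ⟶ S ⨯ ∏ᶜ W).op
        (Finset.univ.inf fun h =>
          qc.Q.map (prod.lift prod.fst (prod.snd ≫ Pi.π W h) : S ⨯ ∏ᶜ W ⟶ S ⨯ W h).op
            (qc.ι.app (op (S ⨯ W h)) (γ h)))) ≤ ⊥ := by
    have c1 : qc.Q.map (prod.fst : S ⨯ ((∏ᶜ Z) ⨯ (∏ᶜ W)) ⟶ S).op X0 ≤
        Finset.univ.inf fun i : Fin n =>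
          qc.Q.map (prod.lift prod.fst (g i)).op (qc.ι.app (op (S ⨯ Y (l i))) (α (l i))) :=
      Finset.le_inf fun i _ =>
        (Qmap_mono _ (hX0A (l i))).trans (fa_inst qc.fo S (Y (l i)) _ _ (g i))
    have c2 : qc.Q.map (prod.fst : S ⨯ ((∏ᶜ Z) ⨯ (∏ᶜ W)) ⟶ S).op X0 ≤
        Finset.univ.inf fun k : Fin n' =>
          (qc.Q.map (prod.lift prod.fst (g' k)).op
            (qc.ι.app (op (S ⨯ V (l' k))) (δ (l' k))))ᶜ :=
      Finset.le_inf fun k _ =>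
        (((Qmap_mono _ ((hX0D (l' k)).trans_eq (fa_compl_ex qc.fo S (V (l' k)) _))).trans
          (fa_inst qc.fo S (V (l' k)) _ _ (g' k))).trans_eq (Qmap_compl _ _))
    have c3 : qc.Q.map (prod.lift prod.fst (prod.snd ≫ prod.fst) :
          S ⨯ ((∏ᶜ Z) ⨯ (∏ᶜ W)) ⟶ S ⨯ ∏ᶜ Z).op
        (Finset.univ.inf fun j =>
          qc.Q.map (prod.lift prod.fst (prod.snd ≫ Pi.π Z j) : S ⨯ ∏ᶜ Z ⟶ S ⨯ Z j).op
            ((qc.ι.app (op (S ⨯ Z j)) (β j))ᶜ)) =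
        Finset.univ.inf fun j : Fin jbar =>
          (qc.Q.map (prod.lift prod.fst
              (prod.snd ≫ prod.fst ≫ Pi.π Z j) :
                S ⨯ ((∏ᶜ Z) ⨯ (∏ᶜ W)) ⟶ S ⨯ Z j).op (qc.ι.app (op (S ⨯ Z j)) (β j)))ᶜ := by
      rw [map_finset_inf]
      refine Finset.inf_congr rfl fun j _ => ?_
      simp only [Function.comp]
      rw [← Qmap_comp]
      have ej : (prod.lift prod.fst (prod.snd ≫ prod.fst) :
            S ⨯ ((∏ᶜ Z) ⨯ (∏ᶜ W)) ⟶ S ⨯ ∏ᶜ Z) ≫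
          (prod.lift prod.fst (prod.snd ≫ Pi.π Z j) : S ⨯ ∏ᶜ Z ⟶ S ⨯ Z j) =
          prod.lift prod.fst (prod.snd ≫ prod.fst ≫ Pi.π Z j) := by
        apply Limits.prod.hom_ext <;> simp
      rw [ej, Qmap_compl]
    have c4 : qc.Q.map (prod.lift prod.fst (prod.snd ≫ prod.snd) :
          S ⨯ ((∏ᶜ Z) ⨯ (∏ᶜ W)) ⟶ S ⨯ ∏ᶜ W).op
        (Finset.univ.inf fun h =>
          qc.Q.map (prod.lift prod.fst (prod.snd ≫ Pi.π W h) : S ⨯ ∏ᶜ W ⟶ S ⨯ W h).op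
            (qc.ι.app (op (S ⨯ W h)) (γ h))) =
        Finset.univ.inf fun h : Fin hbar =>
          qc.Q.map (prod.lift prod.fst
              (prod.snd ≫ prod.snd ≫ Pi.π W h) :
                S ⨯ ((∏ᶜ Z) ⨯ (∏ᶜ W)) ⟶ S ⨯ W h).op (qc.ι.app (op (S ⨯ W h)) (γ h)) := by
      rw [map_finset_inf]
      refine Finset.inf_congr rfl fun h _ => ?_
      simp only [Function.comp]
      rw [← Qmap_comp]
      have eh : (prod.lift prod.fst (prod.snd ≫ prod.snd) :
            S ⨯ ((∏ᶜ Z) ⨯ (∏ᶜ W)) ⟶ S ⨯ ∏ᶜ W) ≫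
          (prod.lift prod.fst (prod.snd ≫ Pi.π W h) : S ⨯ ∏ᶜ W ⟶ S ⨯ W h) =
          prod.lift prod.fst (prod.snd ≫ prod.snd ≫ Pi.π W h) := by
        apply Limits.prod.hom_ext <;> simp
      rw [eh]
    refine aux_bot ?_ ?_ ?_ ?_ h2'
    · exact inf_le_left.trans c1
    · exact (inf_le_right.trans inf_le_right).trans_eq c4
    · exact (inf_le_right.trans (inf_le_left.trans_eq c3)).trans_eq
        (Finset.compl_sup _ _).symm
    · exact (inf_le_left.trans c2).trans_eq (Finset.compl_sup _ _).symm
  exact hfrob.trans ((ex_mono qc.fo S ((∏ᶜ Z) ⨯ (∏ᶜ W)) hinner).trans_eq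
    (ex_bot qc.fo S ((∏ᶜ Z) ⨯ (∏ᶜ W))))


set_option maxHeartbeats 4000000 in
/-- The forward (hard) direction of the doctrinal Herbrand theorem. -/
lemma stmt5_mp {C : Type u} [SmallCategory C] [HasFiniteProducts C]
    (P : Cᵒᵖ ⥤ BoolAlg.{u}) (qc : QuantifierCompletion.{u, u, u + 1, u, u} P)
    {ibar hbar jbar kbar : ℕ} (S : C) (Y : Fin ibar → C) (W : Fin hbar → C)
    (Z : Fin jbar → C) (V : Fin kbar → C)
    (α : ∀ i, P.obj (op (S ⨯ Y i))) (γ : ∀ h, P.obj (op (S ⨯ W h)))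
    (β : ∀ j, P.obj (op (S ⨯ Z j))) (δ : ∀ k, P.obj (op (S ⨯ V k)))
    (h1 : (Finset.univ.inf fun i => qc.fo.fa S (Y i) (qc.ι.app (op (S ⨯ Y i)) (α i))) ⊓
        (Finset.univ.inf fun h => qc.fo.ex S (W h) (qc.ι.app (op (S ⨯ W h)) (γ h))) ≤
      (Finset.univ.sup fun j => qc.fo.fa S (Z j) (qc.ι.app (op (S ⨯ Z j)) (β j))) ⊔
        Finset.univ.sup fun k => qc.fo.ex S (V k) (qc.ι.app (op (S ⨯ V k)) (δ k))) :
    ∃ (n n' : ℕ) (l : Fin n → Fin ibar) (l' : Fin n' → Fin kbar)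
        (g : ∀ i : Fin n, (S ⨯ ((∏ᶜ Z) ⨯ (∏ᶜ W))) ⟶ Y (l i))
        (g' : ∀ k : Fin n', (S ⨯ ((∏ᶜ Z) ⨯ (∏ᶜ W))) ⟶ V (l' k)),
        (Finset.univ.inf fun i =>
            P.map (prod.lift (prod.fst : S ⨯ ((∏ᶜ Z) ⨯ (∏ᶜ W)) ⟶ S) (g i)).op (α (l i))) ⊓
          (Finset.univ.inf fun h =>
            P.map (prod.lift (prod.fst : S ⨯ ((∏ᶜ Z) ⨯ (∏ᶜ W)) ⟶ S)
              ((prod.snd : S ⨯ ((∏ᶜ Z) ⨯ (∏ᶜ W)) ⟶ (∏ᶜ Z) ⨯ (∏ᶜ W)) ≫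
                (prod.snd : (∏ᶜ Z) ⨯ (∏ᶜ W) ⟶ ∏ᶜ W) ≫ Pi.π W h)).op (γ h)) ≤
        (Finset.univ.sup fun j =>
            P.map (prod.lift (prod.fst : S ⨯ ((∏ᶜ Z) ⨯ (∏ᶜ W)) ⟶ S)
              ((prod.snd : S ⨯ ((∏ᶜ Z) ⨯ (∏ᶜ W)) ⟶ (∏ᶜ Z) ⨯ (∏ᶜ W)) ≫
                (prod.fst : (∏ᶜ Z) ⨯ (∏ᶜ W) ⟶ ∏ᶜ Z) ≫ Pi.π Z j)).op (β j)) ⊔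
          Finset.univ.sup fun k =>
            P.map (prod.lift (prod.fst : S ⨯ ((∏ᶜ Z) ⨯ (∏ᶜ W)) ⟶ S) (g' k)).op
              (δ (l' k)) := by
  classical
  by_contra hno
  set T : C := S ⨯ ((∏ᶜ Z) ⨯ (∏ᶜ W)) with hT
  set γinst : Fin hbar → P.obj (op T) := fun h =>
    P.map (prod.lift (prod.fst : T ⟶ S)
      ((prod.snd : T ⟶ (∏ᶜ Z) ⨯ (∏ᶜ W)) ≫
        (prod.snd : (∏ᶜ Z) ⨯ (∏ᶜ W) ⟶ ∏ᶜ W) ≫ Pi.π W h)).op (γ h) with hγinst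
  set βinst : Fin jbar → P.obj (op T) := fun j =>
    P.map (prod.lift (prod.fst : T ⟶ S)
      ((prod.snd : T ⟶ (∏ᶜ Z) ⨯ (∏ᶜ W)) ≫
        (prod.fst : (∏ᶜ Z) ⨯ (∏ᶜ W) ⟶ ∏ᶜ Z) ≫ Pi.π Z j)).op (β j) with hβinst
  set aEl : (Σ i : Fin ibar, T ⟶ Y i) → P.obj (op T) := fun p =>
    P.map (prod.lift (prod.fst : T ⟶ S) p.2).op (α p.1) with haEl
  set dEl : (Σ k : Fin kbar, T ⟶ V k) → P.obj (op T) := fun p =>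
    P.map (prod.lift (prod.fst : T ⟶ S) p.2).op (δ p.1) with hdEl
  set base : List (Σ i : Fin ibar, T ⟶ Y i) → List (Σ k : Fin kbar, T ⟶ V k) →
      P.obj (op T) := fun IL KL =>
    ((IL.map aEl).foldr (· ⊓ ·) ⊤ ⊓ Finset.univ.inf γinst) ⊓
      (Finset.univ.sup βinst ⊔ (KL.map dEl).foldr (· ⊔ ·) ⊥)ᶜ with hbase
  set F0 : Set (P.obj (op T)) := {x | ∃ IL KL, base IL KL ≤ x} with hF0
  -- `F0` is a proper filter
  have htopF0 : (⊤ : P.obj (op T)) ∈ F0 := ⟨[], [], le_top⟩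
  have hupF0 : ∀ a b : P.obj (op T), a ∈ F0 → a ≤ b → b ∈ F0 := by
    rintro a b ⟨IL, KL, hle⟩ hab
    exact ⟨IL, KL, hle.trans hab⟩
  have hbase_le : ∀ IL₁ KL₁ IL₂ KL₂, base (IL₁ ++ IL₂) (KL₁ ++ KL₂) ≤ base IL₁ KL₁ ⊓ base IL₂ KL₂ := by
    intro IL₁ KL₁ IL₂ KL₂
    rw [hbase]
    simp only [List.map_append]
    rw [foldr_inf_append, foldr_sup_append]
    refine le_inf (inf_le_inf ?_ ?_) (inf_le_inf ?_ ?_)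
    · exact inf_le_inf_right _ inf_le_left
    · exact compl_le_compl (sup_le_sup_left le_sup_left _)
    · exact inf_le_inf_right _ inf_le_right
    · exact compl_le_compl (sup_le_sup_left le_sup_right _)
  have hinfF0 : ∀ a b : P.obj (op T), a ∈ F0 → b ∈ F0 → a ⊓ b ∈ F0 := by
    rintro a b ⟨IL₁, KL₁, h₁⟩ ⟨IL₂, KL₂, h₂⟩
    exact ⟨IL₁ ++ IL₂, KL₁ ++ KL₂, (hbase_le IL₁ KL₁ IL₂ KL₂).trans (inf_le_inf h₁ h₂)⟩
  have hbotF0 : (⊥ : P.obj (op T)) ∉ F0 := by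
    rintro ⟨IL, KL, hle⟩
    apply hno
    refine ⟨IL.length, KL.length, fun t => (IL.get t).1, fun t => (KL.get t).1,
      fun t => (IL.get t).2, fun t => (KL.get t).2, ?_⟩
    have hXY : ((IL.map aEl).foldr (· ⊓ ·) ⊤ ⊓ Finset.univ.inf γinst) ≤
        Finset.univ.sup βinst ⊔ (KL.map dEl).foldr (· ⊔ ·) ⊥ := by
      rw [← sdiff_eq_bot_iff, sdiff_eq]
      exact le_bot_iff.1 hle
    rw [foldr_inf_eq_inf_get IL aEl, foldr_sup_eq_sup_get KL dEl] at hXY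
    simp only [haEl, hdEl, hγinst, hβinst] at hXY
    exact hXY
  obtain ⟨U, hF0U, hUinf, hUup, hUbot, hUultra⟩ :=
    exists_ultrafilter_extending F0 htopF0 hinfF0 hupF0 hbotF0
  -- basic membership facts about `U`
  have uA : ∀ (i : Fin ibar) (f : T ⟶ Y i),
      P.map (prod.lift (prod.fst : T ⟶ S) f).op (α i) ∈ U := by
    intro i f
    refine hF0U ⟨[⟨i, f⟩], [], ?_⟩
    rw [hbase]
    refine inf_le_left.trans (inf_le_left.trans ?_)
    simp [haEl]
  have uγ : ∀ h : Fin hbar, γinst h ∈ U := by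
    intro h
    refine hF0U ⟨[], [], ?_⟩
    rw [hbase]
    exact inf_le_left.trans (inf_le_right.trans (Finset.inf_le (Finset.mem_univ h)))
  have uβ : ∀ j : Fin jbar, βinst j ∉ U := by
    intro j hjU
    have hc : (βinst j)ᶜ ∈ U := by
      refine hF0U ⟨[], [], ?_⟩
      rw [hbase]
      exact inf_le_right.trans
        (compl_le_compl ((Finset.le_sup (Finset.mem_univ j)).trans le_sup_left))
    exact (U_compl_iff U hUinf hUup hUbot hUultra _).1 hc hjU
  have uδ : ∀ (k : Fin kbar) (f : T ⟶ V k),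
      P.map (prod.lift (prod.fst : T ⟶ S) f).op (δ k) ∉ U := by
    intro k f hkU
    have hc : (P.map (prod.lift (prod.fst : T ⟶ S) f).op (δ k))ᶜ ∈ U := by
      refine hF0U ⟨[], [⟨k, f⟩], ?_⟩
      rw [hbase]
      refine inf_le_right.trans (compl_le_compl ?_)
      refine le_trans ?_ le_sup_right
      simp [hdEl]
    exact (U_compl_iff U hUinf hUup hUbot hUultra _).1 hc hkU
  -- the model and the universal property
  set Φ : DoctrineHom P subsetsDoctrine.{u} := modelHom P T U hUinf hUup hUbot hUultra with hΦ
  obtain ⟨N, ⟨hFO, hfac⟩, -⟩ := qc.univ subsetsDoctrine.{u} subFO.{u} Φ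
  have hfun : Φ.functor = 𝟭 C ⋙ N.functor := congrArg DoctrineHom.functor hfac
  have htr : HEq Φ.trans ((idDoctrineHom qc.ι).comp N).trans := hfac ▸ HEq.refl Φ.trans
  have e : ∀ X : C, (T ⟶ X) = N.functor.obj X :=
    fun X => congrArg (fun (F : C ⥤ Type u) => F.obj X) hfun
  have keyA : ∀ (X : C) (a : P.obj (op X)) (f : T ⟶ X),
      (cast (e X) f ∈ tS (N.trans.app (op X) (qc.ι.app (op X) a)) ↔ P.map f.op a ∈ U) := by
    intro X a f
    exact (cast_mem_trans hfun Φ.trans ((idDoctrineHom qc.ι).comp N).trans htr X a f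
      (e X)).trans Iff.rfl
  have keyPair : ∀ (X Y' : C) (f : T ⟶ X) (gg : T ⟶ Y'),
      N.prodPair X Y' (pairEl (cast (e X) f) (cast (e Y') gg)) =
        cast (e (X ⨯ Y')) (prod.lift f gg) := by
    intro X Y' f gg
    letI := N.preserves
    have hcomp : prodComparison N.functor X Y' (cast (e (X ⨯ Y')) (prod.lift f gg)) =
        pairEl (cast (e X) f) (cast (e Y') gg) := by
      apply prodTypeExt
      · have h1 : (Limits.prod.fst : N.functor.obj X ⨯ N.functor.obj Y' ⟶ N.functor.obj X)
            (prodComparison N.functor X Y' (cast (e (X ⨯ Y')) (prod.lift f gg))) =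
            N.functor.map (prod.fst : X ⨯ Y' ⟶ X) (cast (e (X ⨯ Y')) (prod.lift f gg)) :=
          ConcreteCategory.congr_hom (prodComparison_fst N.functor X Y') _
        have h2 : N.functor.map (prod.fst : X ⨯ Y' ⟶ X) (cast (e (X ⨯ Y')) (prod.lift f gg)) =
            cast (e X) (Φ.functor.map (prod.fst : X ⨯ Y' ⟶ X) (prod.lift f gg)) :=
          cast_map hfun (prod.fst : X ⨯ Y' ⟶ X) (prod.lift f gg) (e (X ⨯ Y')) (e X)
        rw [h1, h2, fst_pairEl]
        exact congrArg (cast (e X)) (prod.lift_fst f gg)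
      · have h1 : (Limits.prod.snd : N.functor.obj X ⨯ N.functor.obj Y' ⟶ N.functor.obj Y')
            (prodComparison N.functor X Y' (cast (e (X ⨯ Y')) (prod.lift f gg))) =
            N.functor.map (prod.snd : X ⨯ Y' ⟶ Y') (cast (e (X ⨯ Y')) (prod.lift f gg)) :=
          ConcreteCategory.congr_hom (prodComparison_snd N.functor X Y') _
        have h2 : N.functor.map (prod.snd : X ⨯ Y' ⟶ Y') (cast (e (X ⨯ Y')) (prod.lift f gg)) =
            cast (e Y') (Φ.functor.map (prod.snd : X ⨯ Y' ⟶ Y') (prod.lift f gg)) :=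
          cast_map hfun (prod.snd : X ⨯ Y' ⟶ Y') (prod.lift f gg) (e (X ⨯ Y')) (e Y')
        rw [h1, h2, snd_pairEl]
        exact congrArg (cast (e Y')) (prod.lift_snd f gg)
    have hinv : N.prodPair X Y' (prodComparison N.functor X Y'
        (cast (e (X ⨯ Y')) (prod.lift f gg))) = cast (e (X ⨯ Y')) (prod.lift f gg) :=
      ConcreteCategory.congr_hom (PreservesLimitPair.iso N.functor X Y').hom_inv_id _
    rw [← hcomp, hinv]
  have keyFA : ∀ (X Y' : C) (a : P.obj (op (X ⨯ Y'))) (f : T ⟶ X),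
      (cast (e X) f ∈ tS (N.trans.app (op X)
          (qc.fo.fa X Y' (qc.ι.app (op (X ⨯ Y')) a))) ↔
        ∀ gg : T ⟶ Y', P.map (prod.lift f gg).op a ∈ U) := by
    intro X Y' a f
    rw [hFO X Y' (qc.ι.app (op (X ⨯ Y')) a)]
    constructor
    · intro hmem gg
      have hp := hmem (pairEl (cast (e X) f) (cast (e Y') gg)) (fst_pairEl _ _)
      have hp' : N.prodPair X Y' (pairEl (cast (e X) f) (cast (e Y') gg)) ∈
          tS (N.trans.app (op (X ⨯ Y')) (qc.ι.app (op (X ⨯ Y')) a)) := hp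
      rw [keyPair] at hp'
      exact (keyA (X ⨯ Y') a (prod.lift f gg)).1 hp'
    · intro hU p hp
      have hsnd : (Limits.prod.snd : N.functor.obj X ⨯ N.functor.obj Y' ⟶ N.functor.obj Y') p =
          cast (e Y') (cast (e Y').symm
            ((Limits.prod.snd : N.functor.obj X ⨯ N.functor.obj Y' ⟶ N.functor.obj Y') p)) := by
        simp
      rw [← pairEl_eta p, hp, hsnd]
      show N.prodPair X Y' _ ∈ tS (N.trans.app (op (X ⨯ Y')) (qc.ι.app (op (X ⨯ Y')) a))
      rw [keyPair]
      exact (keyA (X ⨯ Y') a _).2 (hU _)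
  have keyEX : ∀ (X Y' : C) (a : P.obj (op (X ⨯ Y'))) (f : T ⟶ X),
      (cast (e X) f ∈ tS (N.trans.app (op X)
          (qc.fo.ex X Y' (qc.ι.app (op (X ⨯ Y')) a))) ↔
        ∃ gg : T ⟶ Y', P.map (prod.lift f gg).op a ∈ U) := by
    intro X Y' a f
    unfold FOStructure.ex
    rw [map_compl', show (qc.ι.app (op (X ⨯ Y')) a)ᶜ = qc.ι.app (op (X ⨯ Y')) aᶜ from
      (map_compl' _ _).symm, mem_tS_compl, keyFA X Y' aᶜ f]
    push_neg
    constructor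
    · rintro ⟨gg, hgg⟩
      refine ⟨gg, ?_⟩
      rw [map_compl'] at hgg
      by_contra hcon
      exact hgg ((U_compl_iff U hUinf hUup hUbot hUultra _).2 hcon)
    · rintro ⟨gg, hgg⟩
      refine ⟨gg, ?_⟩
      rw [map_compl']
      intro hc
      exact (U_compl_iff U hUinf hUup hUbot hUultra _).1 hc hgg
  -- evaluate at the generic point
  have hmono := OrderHomClass.mono (N.trans.app (op S)) h1
  have hsub := tS_le.1 hmono
  have hp0L : cast (e S) (prod.fst : T ⟶ S) ∈ tS (N.trans.app (op S)
      ((Finset.univ.inf fun i => qc.fo.fa S (Y i) (qc.ι.app (op (S ⨯ Y i)) (α i))) ⊓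
        Finset.univ.inf fun h => qc.fo.ex S (W h) (qc.ι.app (op (S ⨯ W h)) (γ h)))) := by
    rw [map_inf, map_finset_inf, map_finset_inf, mem_tS_inf]
    constructor
    · rw [mem_tS_finsetInf]
      intro i _
      exact (keyFA S (Y i) (α i) prod.fst).2 (fun gg => uA i gg)
    · rw [mem_tS_finsetInf]
      intro h _
      refine (keyEX S (W h) (γ h) prod.fst).2 ⟨(prod.snd : T ⟶ (∏ᶜ Z) ⨯ (∏ᶜ W)) ≫
        (prod.snd : (∏ᶜ Z) ⨯ (∏ᶜ W) ⟶ ∏ᶜ W) ≫ Pi.π W h, ?_⟩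
      exact uγ h
  have hp0R := hsub hp0L
  rw [map_sup, map_finset_sup, map_finset_sup, mem_tS_sup, mem_tS_finsetSup,
    mem_tS_finsetSup] at hp0R
  rcases hp0R with ⟨j, -, hj⟩ | ⟨k, -, hk⟩
  · have := (keyFA S (Z j) (β j) prod.fst).1 hj ((prod.snd : T ⟶ (∏ᶜ Z) ⨯ (∏ᶜ W)) ≫
      (prod.fst : (∏ᶜ Z) ⨯ (∏ᶜ W) ⟶ ∏ᶜ Z) ≫ Pi.π Z j)
    exact uβ j this
  · obtain ⟨gg, hgg⟩ := (keyEX S (V k) (δ k) prod.fst).1 hk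
    exact uδ k gg hgg

theorem stmt5 {C : Type u} [SmallCategory C] [HasFiniteProducts C]
    (P : Cᵒᵖ ⥤ BoolAlg.{u}) (qc : QuantifierCompletion.{u, u, u + 1, u, u} P)
    {ibar hbar jbar kbar : ℕ} (S : C) (Y : Fin ibar → C) (W : Fin hbar → C)
    (Z : Fin jbar → C) (V : Fin kbar → C)
    (α : ∀ i, P.obj (op (S ⨯ Y i))) (γ : ∀ h, P.obj (op (S ⨯ W h)))
    (β : ∀ j, P.obj (op (S ⨯ Z j))) (δ : ∀ k, P.obj (op (S ⨯ V k))) :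
    ((Finset.univ.inf fun i => qc.fo.fa S (Y i) (qc.ι.app (op (S ⨯ Y i)) (α i))) ⊓
        (Finset.univ.inf fun h => qc.fo.ex S (W h) (qc.ι.app (op (S ⨯ W h)) (γ h))) ≤
      (Finset.univ.sup fun j => qc.fo.fa S (Z j) (qc.ι.app (op (S ⨯ Z j)) (β j))) ⊔
        Finset.univ.sup fun k => qc.fo.ex S (V k) (qc.ι.app (op (S ⨯ V k)) (δ k))) ↔
      ∃ (n n' : ℕ) (l : Fin n → Fin ibar) (l' : Fin n' → Fin kbar)
        (g : ∀ i : Fin n, (S ⨯ ((∏ᶜ Z) ⨯ (∏ᶜ W))) ⟶ Y (l i))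
        (g' : ∀ k : Fin n', (S ⨯ ((∏ᶜ Z) ⨯ (∏ᶜ W))) ⟶ V (l' k)),
        (Finset.univ.inf fun i =>
            P.map (prod.lift (prod.fst : S ⨯ ((∏ᶜ Z) ⨯ (∏ᶜ W)) ⟶ S) (g i)).op (α (l i))) ⊓
          (Finset.univ.inf fun h =>
            P.map (prod.lift (prod.fst : S ⨯ ((∏ᶜ Z) ⨯ (∏ᶜ W)) ⟶ S)
              ((prod.snd : S ⨯ ((∏ᶜ Z) ⨯ (∏ᶜ W)) ⟶ (∏ᶜ Z) ⨯ (∏ᶜ W)) ≫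
                (prod.snd : (∏ᶜ Z) ⨯ (∏ᶜ W) ⟶ ∏ᶜ W) ≫ Pi.π W h)).op (γ h)) ≤
        (Finset.univ.sup fun j =>
            P.map (prod.lift (prod.fst : S ⨯ ((∏ᶜ Z) ⨯ (∏ᶜ W)) ⟶ S)
              ((prod.snd : S ⨯ ((∏ᶜ Z) ⨯ (∏ᶜ W)) ⟶ (∏ᶜ Z) ⨯ (∏ᶜ W)) ≫
                (prod.fst : (∏ᶜ Z) ⨯ (∏ᶜ W) ⟶ ∏ᶜ Z) ≫ Pi.π Z j)).op (β j)) ⊔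
          Finset.univ.sup fun k =>
            P.map (prod.lift (prod.fst : S ⨯ ((∏ᶜ Z) ⨯ (∏ᶜ W)) ⟶ S) (g' k)).op
              (δ (l' k)) := by
  constructor
  · exact stmt5_mp P qc S Y W Z V α γ β δ
  · rintro ⟨n, n', l, l', g, g', h2⟩
    exact stmt5_mpr P qc S Y W Z V α γ β δ n n' l l' g g' h2

end BooleanDoctrine
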